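/- Let y ∈ ℝⁿ, β⁰, β ∈ ℝᵖ, X an n×p real matrix, and suppose ‖Xᵀ(y - Xβ⁰)‖_{ℓ_v} ≤ κ. Then for conjugate exponents 1/u + 1/v = 1 (u ≥ 1), ‖y - Xβ‖₂² - ‖y - Xβ⁰‖₂² ≤ 2κ‖β - β⁰‖_{ℓ_u} + ‖XᵀX‖_{ℓ_u→ℓ_v}·‖β - β⁰‖_{ℓ_u}², where ‖A‖_{ℓ_u→ℓ_v} = max_{‖x‖_{ℓ_u}=1}‖Ax‖_{ℓ_v}. -/

import Mathlib

open Matrix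

theorem likelihood_ratio_deterministic_bound (n p : ℕ)
    (X : Matrix (Fin n) (Fin p) ℝ) (y : Fin n → ℝ) (β0 β : Fin p → ℝ)
    (u v κ N : ℝ) (hu : 1 ≤ u) (huv : 1 / u + 1 / v = 1)
    (hκ0 : 0 ≤ κ)
    -- ℓ_v bound on Xᵀ(y - Xβ⁰)
    (hκ : (∑ i, |Xᵀ.mulVec (y - X.mulVec β0) i| ^ v) ^ (1 / v) ≤ κ)
    -- N bounds the ℓ_u → ℓ_v operator norm of XᵀX
    (hN : ∀ x : Fin p → ℝ,
      (∑ i, |(Xᵀ * X).mulVec x i| ^ v) ^ (1 / v) ≤ N * (∑ i, |x i| ^ u) ^ (1 / u)) :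
    ∑ j, (y j - X.mulVec β j) ^ 2 - ∑ j, (y j - X.mulVec β0 j) ^ 2 ≤
      2 * κ * (∑ i, |β i - β0 i| ^ u) ^ (1 / u) +
        N * ((∑ i, |β i - β0 i| ^ u) ^ (1 / u)) ^ 2 := by
  -- rule out the degenerate case u = 1 (then 1/v = 0, so v = 0, contradicting hN at 0)
  rcases eq_or_lt_of_le hu with hu1 | hu1
  · exfalso
    have hv0 : v = 0 := by
      have : 1 / v = 0 := by rw [← hu1] at huv; linarith
      simpa [div_eq_zero_iff] using this
    have h0 := hN 0
    simp only [hv0] at h0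
    have hL : (∑ i, |(Xᵀ * X).mulVec (0 : Fin p → ℝ) i| ^ (0:ℝ)) ^ ((1:ℝ) / 0) = 1 := by
      simp [Real.rpow_zero]
    have hR : N * (∑ i, |(0 : Fin p → ℝ) i| ^ u) ^ (1 / u) = 0 := by
      have hu0 : u ≠ 0 := by linarith
      have hz : (∑ i : Fin p, |(0 : Fin p → ℝ) i| ^ u) = 0 := by
        simp [Real.zero_rpow hu0]
      rw [hz, Real.zero_rpow (one_div_ne_zero hu0), mul_zero]
    rw [hL, hR] at h0
    linarith
  · -- main case: u > 1, so u, v are genuine conjugate exponents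
    have hpq : Real.HolderConjugate u v := Real.holderConjugate_iff.mpr ⟨hu1, by rw [← one_div, ← one_div]; exact huv⟩
    set δ : Fin p → ℝ := β - β0 with hδ
    have hδi : ∀ i, δ i = β i - β0 i := fun i => rfl
    set r : Fin n → ℝ := y - X.mulVec β0 with hr
    set Du : ℝ := (∑ i, |β i - β0 i| ^ u) ^ (1 / u) with hDu
    -- algebraic identity
    have key : ∑ j, (y j - X.mulVec β j) ^ 2 - ∑ j, (y j - X.mulVec β0 j) ^ 2
        = ∑ i, (2 * (-(Xᵀ.mulVec r i))) * δ i + ∑ i, ((Xᵀ * X).mulVec δ i) * δ i := by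
      have hXβ : X.mulVec β = X.mulVec β0 + X.mulVec δ := by
        rw [hδ, Matrix.mulVec_sub]; ext j; simp
      have h1' : ∀ w : Fin n → ℝ, ∑ i, Xᵀ.mulVec w i * δ i = ∑ j, w j * X.mulVec δ j := by
        intro w
        have h := Matrix.dotProduct_mulVec w X δ
        simpa [dotProduct, Matrix.mulVec_transpose] using h.symm
      have h1 : ∑ i, (-(Xᵀ.mulVec r i)) * δ i = -(∑ j, r j * X.mulVec δ j) := by
        rw [show (∑ i, (-(Xᵀ.mulVec r i)) * δ i) = -∑ i, Xᵀ.mulVec r i * δ i by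
          simp [neg_mul, Finset.sum_neg_distrib], h1' r]
      have h2 : ∑ i, ((Xᵀ * X).mulVec δ i) * δ i = ∑ j, (X.mulVec δ j) ^ 2 := by
        simp only [← Matrix.mulVec_mulVec]
        rw [h1' (X.mulVec δ)]
        congr 1; ext j; ring
      simp only [mul_assoc, ← Finset.mul_sum, h1, h2]
      rw [hXβ]
      have : ∀ j, (y j - (X.mulVec β0 + X.mulVec δ) j) ^ 2
          = (y j - X.mulVec β0 j) ^ 2 - 2 * (r j * X.mulVec δ j) + (X.mulVec δ j) ^ 2 := by
        intro j; simp only [Pi.add_apply, hr, Pi.sub_apply]; ring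
      simp only [this, Finset.sum_add_distrib, Finset.sum_sub_distrib, ← Finset.mul_sum]
      ring
    rw [key]
    -- bound term 1 by Hölder
    have habs : ∀ i, |(-(Xᵀ.mulVec r i))| ^ v = |Xᵀ.mulVec (y - X.mulVec β0) i| ^ v := by
      intro i; rw [abs_neg]
    have hterm1 : ∑ i, (-(Xᵀ.mulVec r i)) * δ i ≤ κ * Du := by
      calc ∑ i, (-(Xᵀ.mulVec r i)) * δ i
          ≤ (∑ i, |(-(Xᵀ.mulVec r i))| ^ v) ^ (1 / v) * (∑ i, |δ i| ^ u) ^ (1 / u) :=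
            Real.inner_le_Lp_mul_Lq Finset.univ _ _ hpq.symm
        _ = (∑ i, |Xᵀ.mulVec (y - X.mulVec β0) i| ^ v) ^ (1 / v) * Du := by
            simp only [habs, hDu, hδi]
        _ ≤ κ * Du := by
            apply mul_le_mul_of_nonneg_right hκ
            rw [hDu]
            positivity
    have hterm2 : ∑ i, ((Xᵀ * X).mulVec δ i) * δ i ≤ N * Du ^ 2 := by
      calc ∑ i, ((Xᵀ * X).mulVec δ i) * δ i
          ≤ (∑ i, |(Xᵀ * X).mulVec δ i| ^ v) ^ (1 / v) * (∑ i, |δ i| ^ u) ^ (1 / u) :=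
            Real.inner_le_Lp_mul_Lq Finset.univ _ _ hpq.symm
        _ ≤ (N * (∑ i, |δ i| ^ u) ^ (1 / u)) * (∑ i, |δ i| ^ u) ^ (1 / u) := by
            apply mul_le_mul_of_nonneg_right (hN δ)
            positivity
        _ = N * Du ^ 2 := by
            simp only [hDu, hδi]; ring
    have hDu0 : 0 ≤ Du := by rw [hDu]; positivity
    calc ∑ i, (2 * (-(Xᵀ.mulVec r i))) * δ i + ∑ i, ((Xᵀ * X).mulVec δ i) * δ i
        = 2 * (∑ i, (-(Xᵀ.mulVec r i)) * δ i) + ∑ i, ((Xᵀ * X).mulVec δ i) * δ i := by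
          rw [Finset.mul_sum]; congr 1; apply Finset.sum_congr rfl; intros; ring
      _ ≤ 2 * (κ * Du) + N * Du ^ 2 := by
          have := hterm1
          nlinarith [hterm2]
      _ = 2 * κ * Du + N * Du ^ 2 := by ring
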